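/- Let A be a unital C*-algebra, B ⊆ A a closed unital *-subalgebra, S a monoid, and for each s ∈ S let α_s : A → A be a unital *-homomorphism with α_{st} = α_s ∘ α_t, α_e = id, and α_s(B) ⊆ B for all s, t ∈ S. Suppose there is a sequence (F_n) of nonempty finite subsets of S such that for every s ∈ S, |F_n s Δ F_n| / |F_n| → 0 as n → ∞, where F_n s = {h·s : h ∈ F_n} and Δ is the symmetric difference. If ω is a state on B satisfying ω(α_s(b)) = ω(b) for all b ∈ B and s ∈ S, then there exists a state ω̃ on A such that ω̃ restricted to B equals ω and ω̃ ∘ α_s = ω̃ for every s ∈ S. -/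

import Mathlib

open Filter Topology
open scoped ComplexOrder symmDiff
lemma aux_isClosed_nonneg : IsClosed {z : ℂ | 0 ≤ z} := by
  have : {z : ℂ | 0 ≤ z} = {z : ℂ | 0 ≤ z.re} ∩ {z : ℂ | z.im = 0} := by
    ext z; simp [Complex.le_def, eq_comm]
  rw [this]
  exact (isClosed_le continuous_const Complex.continuous_re).inter
    (isClosed_eq Complex.continuous_im continuous_const)

lemma aux_map_nonneg {A : Type*} [CStarAlgebra A] [PartialOrder A] [StarOrderedRing A]
    (φ : A →⋆ₐ[ℂ] A) {a : A} (ha : 0 ≤ a) : 0 ≤ φ a := by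
  have h1 : φ a = star (φ (CFC.sqrt a)) * φ (CFC.sqrt a) := by
    rw [← map_star, ← map_mul]
    congr 1
    rw [IsSelfAdjoint.star_eq (IsSelfAdjoint.of_nonneg (CFC.sqrt_nonneg a)),
      CFC.sqrt_mul_sqrt_self a]
  rw [h1]; exact star_mul_self_nonneg _


lemma aux_sum_bound {S : Type*} [Mul S] [DecidableEq S] (Fn : Finset S) (s : S) (g : S → ℂ) (C : ℝ)
    (hC0 : 0 ≤ C) (hC : ∀ h, ‖g h‖ ≤ C) :
    ‖(∑ h ∈ Fn, g (h * s)) - ∑ h ∈ Fn, g h‖ ≤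
      2 * C * (((Fn.image (fun h => h * s)) ∆ Fn).card : ℝ) := by
  classical
  set G := Fn.image (fun h => h * s) with hG
  set c : S → ℕ := fun k => (Fn.filter (fun h => h * s = k)).card with hc
  have hsum : ∑ h ∈ Fn, g (h * s) = ∑ k ∈ G, c k • g k := Finset.sum_comp g (fun h => h * s)
  have hcard : Fn.card = ∑ k ∈ G, c k := Finset.card_eq_sum_card_image _ _
  have hone : ∀ k ∈ G, 1 ≤ c k := by
    intro k hk
    obtain ⟨h, hh, rfl⟩ := Finset.mem_image.1 hk
    exact Nat.one_le_iff_ne_zero.2 (Finset.card_ne_zero_of_mem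
      (Finset.mem_filter.2 ⟨hh, rfl⟩))
  have h1 : ‖(∑ h ∈ Fn, g (h * s)) - ∑ k ∈ G, g k‖ ≤ C * ((Fn.card : ℝ) - G.card) := by
    rw [hsum, ← Finset.sum_sub_distrib]
    calc ‖∑ k ∈ G, (c k • g k - g k)‖ ≤ ∑ k ∈ G, ‖c k • g k - g k‖ := norm_sum_le _ _
      _ ≤ ∑ k ∈ G, ((c k : ℝ) - 1) * C := by
          apply Finset.sum_le_sum
          intro k hk
          have hck : (1:ℝ) ≤ (c k : ℝ) := by exact_mod_cast hone k hk
          have e : c k • g k - g k = ((((c k : ℝ) - 1 : ℝ)) : ℂ) * g k := by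
            push_cast [nsmul_eq_mul]; ring
          rw [e, norm_mul, Complex.norm_real, Real.norm_eq_abs,
            abs_of_nonneg (sub_nonneg.2 hck)]
          exact mul_le_mul_of_nonneg_left (hC k) (sub_nonneg.2 hck)
      _ = C * ((Fn.card : ℝ) - G.card) := by
          simp only [sub_mul, one_mul, Finset.sum_sub_distrib, ← Finset.sum_mul,
            Finset.sum_const, smul_eq_mul]
          push_cast [hcard]
          ring
  have h2 : ‖(∑ k ∈ G, g k) - ∑ k ∈ Fn, g k‖ ≤ C * ((G ∆ Fn).card : ℝ) := by
    rw [← Finset.sum_sdiff_sub_sum_sdiff]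
    have hcs : ((G ∆ Fn).card : ℝ) = ((G \ Fn).card : ℝ) + ((Fn \ G).card : ℝ) := by
      rw [symmDiff_def, Finset.sup_eq_union, Finset.card_union_of_disjoint disjoint_sdiff_sdiff]
      push_cast; ring
    calc ‖(∑ k ∈ G \ Fn, g k) - ∑ k ∈ Fn \ G, g k‖
        ≤ ‖∑ k ∈ G \ Fn, g k‖ + ‖∑ k ∈ Fn \ G, g k‖ := norm_sub_le _ _
      _ ≤ ∑ k ∈ G \ Fn, ‖g k‖ + ∑ k ∈ Fn \ G, ‖g k‖ := by
          gcongr <;> exact norm_sum_le _ _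
      _ ≤ ((G \ Fn).card : ℝ) * C + ((Fn \ G).card : ℝ) * C := by
          gcongr <;>
            simpa using Finset.sum_le_card_nsmul _ _ C (fun k _ => hC k)
      _ = C * ((G ∆ Fn).card : ℝ) := by rw [hcs]; ring
  have h3 : (Fn.card : ℝ) - (G.card : ℝ) ≤ ((G ∆ Fn).card : ℝ) := by
    have e1 : (Fn ∩ G).card + (Fn \ G).card = Fn.card := Finset.card_inter_add_card_sdiff Fn G
    have e2 : (Fn ∩ G).card ≤ G.card := Finset.card_le_card Finset.inter_subset_right
    have e3 : (Fn \ G).card ≤ (G ∆ Fn).card := by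
      apply Finset.card_le_card
      intro x hx
      rw [Finset.mem_symmDiff]
      rw [Finset.mem_sdiff] at hx
      exact Or.inr ⟨hx.1, hx.2⟩
    have h4 : Fn.card ≤ G.card + (G ∆ Fn).card := e1 ▸ (add_le_add e2 e3)
    have h5 : (Fn.card : ℝ) ≤ (G.card : ℝ) + ((G ∆ Fn).card : ℝ) := by exact_mod_cast h4
    linarith
  calc ‖(∑ h ∈ Fn, g (h * s)) - ∑ h ∈ Fn, g h‖
      ≤ ‖(∑ h ∈ Fn, g (h * s)) - ∑ k ∈ G, g k‖ + ‖(∑ k ∈ G, g k) - ∑ h ∈ Fn, g h‖ := by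
        exact norm_sub_le_norm_sub_add_norm_sub _ _ _
    _ ≤ C * ((Fn.card : ℝ) - G.card) + C * ((G ∆ Fn).card : ℝ) := add_le_add h1 h2
    _ ≤ C * ((G ∆ Fn).card : ℝ) + C * ((G ∆ Fn).card : ℝ) := by
        gcongr
    _ = 2 * C * ((G ∆ Fn).card : ℝ) := by ring

lemma aux_im_zero {A : Type*} [CStarAlgebra A] (g : A →L[ℂ] ℂ) (hg : ‖g‖ ≤ 1)
    (hg1 : g 1 = 1) {a : A} (ha : IsSelfAdjoint a) : (g a).im = 0 := by
  have hone : (1 : A) ≠ 0 := by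
    intro h
    rw [h, map_zero] at hg1
    exact one_ne_zero hg1.symm
  haveI : Nontrivial A := ⟨⟨1, 0, hone⟩⟩
  set x := (g a).re
  set y := (g a).im
  have key : ∀ t : ℝ, x ^ 2 + (y + t) ^ 2 ≤ ‖a‖ ^ 2 + t ^ 2 := by
    intro t
    set z : ℂ := (t : ℂ) * Complex.I with hz
    set u : A := a + z • 1 with hu
    have hstar : star u = a - z • 1 := by
      simp [hu, star_smul, ha.star_eq, Complex.conj_ofReal, sub_eq_add_neg, ← neg_smul, hz]
    have hzz : z * z = -((t : ℂ) ^ 2) := by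
      rw [hz]; rw [mul_mul_mul_comm, Complex.I_mul_I]; ring
    have hmul : star u * u = a * a + ((t : ℂ) ^ 2) • 1 := by
      have hcomm : a * (z • 1) = (z • 1) * a := by
        rw [smul_mul_assoc, mul_smul_comm, one_mul, mul_one]
      have h2 : (z • (1 : A)) * (z • 1) = (z * z) • 1 := by
        rw [smul_mul_assoc, mul_smul_comm, smul_smul, one_mul]
      rw [hstar, hu, sub_mul, mul_add, mul_add, hcomm, h2, hzz, neg_smul]
      abel
    have hnu : ‖u‖ ^ 2 ≤ ‖a‖ ^ 2 + t ^ 2 := by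
      have h1 : ‖u‖ ^ 2 = ‖star u * u‖ := by
        rw [CStarRing.norm_star_mul_self]; ring
      rw [h1, hmul]
      calc ‖a * a + ((t : ℂ) ^ 2) • (1 : A)‖ ≤ ‖a * a‖ + ‖((t : ℂ) ^ 2) • (1 : A)‖ :=
            norm_add_le _ _
        _ ≤ ‖a‖ * ‖a‖ + t ^ 2 := by
            gcongr
            · exact norm_mul_le a a
            · rw [norm_smul, norm_one, mul_one, norm_pow, Complex.norm_real]
              simp [sq_abs]
        _ = ‖a‖ ^ 2 + t ^ 2 := by ring
    have hgu : ‖g u‖ ^ 2 = x ^ 2 + (y + t) ^ 2 := by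
      have h2 : g u = g a + z := by
        rw [hu, map_add, map_smul, hg1, smul_eq_mul, mul_one]
      rw [h2, Complex.sq_norm, Complex.normSq_apply]
      simp [hz, x, y]
      ring
    have hgu2 : ‖g u‖ ^ 2 ≤ ‖u‖ ^ 2 := by
      have := g.le_opNorm u
      have h3 : ‖g u‖ ≤ ‖u‖ := this.trans (by
        calc ‖g‖ * ‖u‖ ≤ 1 * ‖u‖ := by gcongr
          _ = ‖u‖ := one_mul _)
      exact pow_le_pow_left₀ (norm_nonneg _) h3 2
    linarith [hgu ▸ hgu2]
  by_contra hy
  set t := (‖a‖ ^ 2 - x ^ 2 - y ^ 2 + 1) / (2 * y) with ht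
  have h2y : 2 * y ≠ 0 := by simpa using hy
  have hk := key t
  have he : 2 * t * y = ‖a‖ ^ 2 - x ^ 2 - y ^ 2 + 1 := by
    rw [ht]; field_simp
  nlinarith [hk, he]

lemma aux_pos {A : Type*} [CStarAlgebra A] [PartialOrder A] [StarOrderedRing A]
    (g : A →L[ℂ] ℂ) (hg : ‖g‖ ≤ 1) (hg1 : g 1 = 1) {a : A} (ha : 0 ≤ a) : 0 ≤ g a := by
  have hone : (1 : A) ≠ 0 := by
    intro h
    rw [h, map_zero] at hg1
    exact one_ne_zero hg1.symm
  haveI : Nontrivial A := ⟨⟨1, 0, hone⟩⟩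
  have hsa : IsSelfAdjoint a := .of_nonneg ha
  have him : (g a).im = 0 := aux_im_zero g hg hg1 hsa
  set r : ℝ := ‖a‖ with hr
  have h1 : a ≤ algebraMap ℝ A r := hsa.le_algebraMap_norm_self
  have h2 : (0 : A) ≤ algebraMap ℝ A r - a := sub_nonneg.2 h1
  have h3 : algebraMap ℝ A r - a ≤ algebraMap ℝ A r := sub_le_self _ ha
  have h4 : ‖algebraMap ℝ A r - a‖ ≤ r := by
    calc ‖algebraMap ℝ A r - a‖ ≤ ‖algebraMap ℝ A r‖ :=
          CStarAlgebra.norm_le_norm_of_nonneg_of_le h2 h3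
      _ = ‖r‖ := norm_algebraMap' A r
      _ = r := by rw [Real.norm_eq_abs, abs_of_nonneg (norm_nonneg a)]
  have halg : algebraMap ℝ A r = (r : ℂ) • (1 : A) := by
    rw [Algebra.algebraMap_eq_smul_one, Complex.coe_smul]
  have h5 : g (algebraMap ℝ A r - a) = (r : ℂ) - g a := by
    rw [map_sub, halg, map_smul, hg1, smul_eq_mul, mul_one]
  have h6 : ‖(r : ℂ) - g a‖ ≤ r := by
    rw [← h5]
    have := (g.le_opNorm _).trans (mul_le_mul hg h4 (norm_nonneg _) zero_le_one)
    simpa using this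
  have h7 : (r : ℂ) - g a = ((r - (g a).re : ℝ) : ℂ) := by
    apply Complex.ext <;> simp [him]
  rw [h7, Complex.norm_real, Real.norm_eq_abs] at h6
  have h8 : 0 ≤ (g a).re := by
    have := abs_le.1 h6
    linarith [this.2]
  rw [Complex.le_def]
  simp [him, h8]


section Main

variable {A : Type*} [CStarAlgebra A] [PartialOrder A] [StarOrderedRing A]
    (B : StarSubalgebra ℂ A) (ω : B →ₗ[ℂ] ℂ)
    (hpos : ∀ b : B, 0 ≤ (b : A) → 0 ≤ ω b)
    (hstate : ω 1 = 1)

include hpos hstate in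
lemma aux_real : ∀ b : B, IsSelfAdjoint (b : A) → (ω b).im = 0 ∧ |(ω b).re| ≤ ‖(b : A)‖ := by
  intro b hb
  set r : ℝ := ‖(b : A)‖ with hr
  have halg : algebraMap ℝ A r = (r : ℂ) • (1 : A) := by
    rw [Algebra.algebraMap_eq_smul_one, Complex.coe_smul]
  set u₁ : B := (r : ℂ) • 1 - b with hu₁
  set u₂ : B := (r : ℂ) • 1 + b with hu₂
  have hc1 : ((u₁ : A)) = (r : ℂ) • (1 : A) - (b : A) := by push_cast [hu₁]; ring
  have hc2 : ((u₂ : A)) = (r : ℂ) • (1 : A) + (b : A) := by push_cast [hu₂]; ring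
  have h01 : (0 : A) ≤ (u₁ : A) := by
    rw [hc1, ← halg]
    exact sub_nonneg.2 hb.le_algebraMap_norm_self
  have h02 : (0 : A) ≤ (u₂ : A) := by
    rw [hc2, ← halg]
    have h := (IsSelfAdjoint.neg hb).le_algebraMap_norm_self
    rw [norm_neg] at h
    simpa [sub_neg_eq_add] using sub_nonneg.2 h
  have hω1 : ω u₁ = (r : ℂ) - ω b := by
    rw [hu₁, map_sub, map_smul, hstate, smul_eq_mul, mul_one]
  have hω2 : ω u₂ = (r : ℂ) + ω b := by
    rw [hu₂, map_add, map_smul, hstate, smul_eq_mul, mul_one]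
  have hp1 := hpos u₁ h01
  have hp2 := hpos u₂ h02
  rw [hω1] at hp1
  rw [hω2] at hp2
  rw [Complex.le_def] at hp1 hp2
  simp only [Complex.sub_re, Complex.sub_im, Complex.add_re, Complex.add_im,
    Complex.ofReal_re, Complex.ofReal_im, Complex.zero_re, Complex.zero_im] at hp1 hp2
  constructor
  · linarith [hp1.2, hp2.2]
  · rw [abs_le]; constructor <;> linarith [hp1.1, hp2.1]


include hpos hstate in
lemma aux_star : ∀ b : B, ω (star b) = (starRingEnd ℂ) (ω b) := by
  intro b
  set x : B := (2⁻¹ : ℂ) • (b + star b) with hx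
  set y : B := (-(Complex.I) / 2) • (b - star b) with hy
  have hxsa' : star x = x := by
    rw [hx, star_smul, star_add, star_star]
    rw [show star (2⁻¹ : ℂ) = 2⁻¹ by simp]
    rw [add_comm]
  have hysa' : star y = y := by
    rw [hy, star_smul, star_sub, star_star]
    rw [show star (-(Complex.I) / 2) = Complex.I / 2 by
      simp [Complex.star_def, Complex.conj_I, neg_div]]
    module
  have hxsa : IsSelfAdjoint (x : A) := by
    rw [IsSelfAdjoint, ← StarMemClass.coe_star, hxsa']
  have hysa : IsSelfAdjoint (y : A) := by
    rw [IsSelfAdjoint, ← StarMemClass.coe_star, hysa']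
  have hIm : Complex.I * (-(Complex.I) / 2) = (2⁻¹ : ℂ) := by
    field_simp
    rw [Complex.I_sq, neg_neg]
  have hbx : b = x + Complex.I • y := by
    rw [hx, hy, smul_smul, hIm]
    module
  have hsbx : star b = x - Complex.I • y := by
    rw [hx, hy, smul_smul, hIm]
    module
  have hxr := (aux_real B ω hpos hstate x hxsa).1
  have hyr := (aux_real B ω hpos hstate y hysa).1
  have hcx : (starRingEnd ℂ) (ω x) = ω x := Complex.conj_eq_iff_im.2 hxr
  have hcy : (starRingEnd ℂ) (ω y) = ω y := Complex.conj_eq_iff_im.2 hyr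
  clear_value x y
  have hωb : ω b = ω x + Complex.I * ω y := by
    conv_lhs => rw [hbx]
    rw [map_add, map_smul, smul_eq_mul]
  have hωsb : ω (star b) = ω x - Complex.I * ω y := by
    conv_lhs => rw [hsbx]
    rw [map_sub, map_smul, smul_eq_mul]
  rw [hωb, hωsb, map_add, map_mul, Complex.conj_I, hcx, hcy]
  ring

include hpos hstate in
lemma aux_norm : ∀ b : B, ‖ω b‖ ≤ ‖(b : A)‖ := by
  intro b
  set w : ℂ := ω b with hw
  set u : B := b - w • 1 with hu
  have hposu : (0 : A) ≤ ((star u * u : B) : A) := by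
    push_cast [StarMemClass.coe_star]
    exact star_mul_self_nonneg ((u : A))
  have hp := hpos _ hposu
  have hexp : star u * u =
      star b * b - w • star b - (star w) • b + (w * star w) • 1 := by
    rw [hu, star_sub, star_smul, star_one]
    simp only [sub_mul, mul_sub, smul_mul_assoc, mul_smul_comm, smul_smul, one_mul, mul_one, smul_sub, smul_add]
    abel
  have hωu : ω (star u * u) = ω (star b * b) - (‖w‖ : ℂ) ^ 2 := by
    rw [hexp, map_add, map_sub, map_sub, map_smul, map_smul, map_smul, hstate,
      aux_star B ω hpos hstate b, ← hw, smul_eq_mul, smul_eq_mul, smul_eq_mul, mul_one,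
      Complex.star_def, ← Complex.mul_conj']
    ring
  have hbb : IsSelfAdjoint ((star b * b : B) : A) := by
    push_cast [StarMemClass.coe_star]
    exact IsSelfAdjoint.star_mul_self ((b : A))
  have hre := aux_real B ω hpos hstate (star b * b) hbb
  have hnbb : ‖((star b * b : B) : A)‖ = ‖(b : A)‖ ^ 2 := by
    push_cast [StarMemClass.coe_star]
    rw [CStarRing.norm_star_mul_self]
    ring
  rw [hωu] at hp
  rw [Complex.le_def] at hp
  have h1 : ‖w‖ ^ 2 ≤ (ω (star b * b)).re := by
    have := hp.1
    push_cast at this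
    simp only [Complex.sub_re, Complex.zero_re, ← Complex.ofReal_pow, Complex.ofReal_re] at this
    linarith
  have h2 : (ω (star b * b)).re ≤ ‖(b : A)‖ ^ 2 := by
    have := (abs_le.1 hre.2).2
    rw [hnbb] at this
    linarith
  have h3 : ‖w‖ ^ 2 ≤ ‖(b : A)‖ ^ 2 := by linarith
  exact le_of_pow_le_pow_left₀ (by norm_num) (norm_nonneg _) h3


include hpos hstate in
lemma aux_ext : ∃ g : A →L[ℂ] ℂ, ‖g‖ ≤ 1 ∧ (∀ b : B, g ↑b = ω b) := by
  set p : Subspace ℂ A := Subalgebra.toSubmodule B.toSubalgebra with hp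
  let f0 : ↥p →ₗ[ℂ] ℂ := {
    toFun := fun x => ω ⟨x.1, x.2⟩
    map_add' := fun x y => map_add ω ⟨x.1, x.2⟩ ⟨y.1, y.2⟩
    map_smul' := fun c x => map_smul ω c ⟨x.1, x.2⟩ }
  have hb : ∀ x : ↥p, ‖f0 x‖ ≤ 1 * ‖x‖ := fun x => by
    rw [one_mul]
    exact aux_norm B ω hpos hstate ⟨x.1, x.2⟩
  obtain ⟨g, hgext, hgnorm⟩ := exists_extension_norm_eq p (f0.mkContinuous 1 hb)
  refine ⟨g, ?_, ?_⟩
  · rw [hgnorm]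
    exact LinearMap.mkContinuous_norm_le f0 zero_le_one hb
  · intro b
    exact (hgext ⟨b.1, b.2⟩).trans rfl

end Main

theorem stmt11 {A : Type*} [CStarAlgebra A] [PartialOrder A] [StarOrderedRing A]
    (B : StarSubalgebra ℂ A) (hB : IsClosed (B : Set A))
    {S : Type*} [Monoid S] [DecidableEq S]
    (α : S → A →⋆ₐ[ℂ] A)
    (hmul : ∀ s t : S, α (s * t) = (α s).comp (α t))
    (hone : α 1 = StarAlgHom.id ℂ A)
    (hB_inv : ∀ s : S, ∀ b ∈ B, α s b ∈ B)
    (F : ℕ → Finset S) (hne : ∀ n, (F n).Nonempty)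
    (hFol : ∀ s : S,
      Tendsto (fun n : ℕ =>
          ((((F n).image (fun h => h * s)) ∆ (F n)).card : ℝ) / ((F n).card : ℝ))
        atTop (nhds 0))
    (ω : B →ₗ[ℂ] ℂ)
    (hpos : ∀ b : B, 0 ≤ (b : A) → 0 ≤ ω b)
    (hstate : ω 1 = 1)
    (hinvar : ∀ s : S, ∀ b c : B, (c : A) = α s (b : A) → ω c = ω b) :
    ∃ ω' : A →ₗ[ℂ] ℂ,
      (∀ a : A, 0 ≤ a → 0 ≤ ω' a) ∧ ω' 1 = 1 ∧
        (∀ b : B, ω' (b : A) = ω b) ∧ (∀ s : S, ∀ a : A, ω' (α s a) = ω' a) := by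
  classical
  obtain ⟨g, hg, hgB⟩ := aux_ext B ω hpos hstate
  have hg1 : g 1 = 1 := by
    have h := hgB 1
    simpa using h.trans hstate
  have hgpos : ∀ a : A, 0 ≤ a → 0 ≤ g a := fun a ha => aux_pos g hg hg1 ha
  have hgap : ∀ (h : S) (a : A), ‖g (α h a)‖ ≤ ‖a‖ := by
    intro h a
    refine (g.le_opNorm _).trans ?_
    calc ‖g‖ * ‖α h a‖ ≤ 1 * ‖a‖ :=
          mul_le_mul hg (NonUnitalStarAlgHom.norm_apply_le (α h) a) (norm_nonneg _) zero_le_one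
      _ = ‖a‖ := one_mul _
  set ψ : ℕ → A → ℂ := fun n a => (((F n).card : ℂ))⁻¹ * ∑ h ∈ F n, g (α h a) with hψ
  have hcardpos : ∀ n, (0 : ℝ) < ((F n).card : ℝ) := fun n => by
    exact_mod_cast (hne n).card_pos
  have hcne : ∀ n, (((F n).card : ℂ)) ≠ 0 := fun n => by
    exact_mod_cast (hne n).card_pos.ne'
  have hinvcast : ∀ n, (((F n).card : ℂ))⁻¹ = ((((F n).card : ℝ))⁻¹ : ℂ) := fun n => by
    push_cast; ring
  have hψbound : ∀ n a, ‖ψ n a‖ ≤ ‖a‖ := by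
    intro n a
    rw [hψ]
    simp only [norm_mul, norm_inv, Complex.norm_natCast]
    have h1 : ‖∑ h ∈ F n, g (α h a)‖ ≤ ((F n).card : ℝ) * ‖a‖ := by
      calc ‖∑ h ∈ F n, g (α h a)‖ ≤ ∑ h ∈ F n, ‖g (α h a)‖ := norm_sum_le _ _
        _ ≤ ∑ _h ∈ F n, ‖a‖ := Finset.sum_le_sum fun h _ => hgap h a
        _ = ((F n).card : ℝ) * ‖a‖ := by rw [Finset.sum_const, nsmul_eq_mul]
    calc (((F n).card : ℝ))⁻¹ * ‖∑ h ∈ F n, g (α h a)‖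
        ≤ (((F n).card : ℝ))⁻¹ * (((F n).card : ℝ) * ‖a‖) := by
          have hnn := (hcardpos n).le
          gcongr
      _ = ‖a‖ := by
          rw [← mul_assoc, inv_mul_cancel₀ (hcardpos n).ne', one_mul]
  obtain ⟨U, hU⟩ := Ultrafilter.exists_le (atTop : Filter ℕ)
  haveI : (↑U : Filter ℕ).NeBot := U.neBot
  have hconv : ∀ a : A, ∃ z : ℂ, Tendsto (fun n => ψ n a) ↑U (𝓝 z) := by
    intro a
    obtain ⟨z, _, h⟩ := (isCompact_closedBall (0 : ℂ) ‖a‖).ultrafilter_le_nhds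
      (U.map fun n => ψ n a) (by
        rw [Ultrafilter.coe_map, Filter.le_principal_iff, Filter.mem_map]
        exact Filter.univ_mem' fun n => mem_closedBall_zero_iff.2 (hψbound n a))
    exact ⟨z, h⟩
  choose L hL using hconv
  have hψadd : ∀ n a b, ψ n (a + b) = ψ n a + ψ n b := by
    intro n a b
    rw [hψ]
    simp only [map_add, Finset.sum_add_distrib, mul_add]
  have hψsmul : ∀ (n) (c : ℂ) (a), ψ n (c • a) = c * ψ n a := by
    intro n c a
    rw [hψ]
    simp only [map_smul, smul_eq_mul, ← Finset.mul_sum]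
    ring
  have hLadd : ∀ a b, L (a + b) = L a + L b := by
    intro a b
    exact tendsto_nhds_unique (hL (a + b))
      (((hL a).add (hL b)).congr fun n => (hψadd n a b).symm)
  have hLsmul : ∀ (c : ℂ) (a), L (c • a) = c * L a := by
    intro c a
    exact tendsto_nhds_unique (hL (c • a))
      (((hL a).const_mul c).congr fun n => (hψsmul n c a).symm)
  refine ⟨{ toFun := L, map_add' := hLadd,
            map_smul' := fun c a => by simpa using hLsmul c a }, ?_, ?_, ?_, ?_⟩
  · -- positivity
    intro a ha
    have hmem : ∀ n, ψ n a ∈ {z : ℂ | 0 ≤ z} := by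
      intro n
      have h1 : 0 ≤ ∑ h ∈ F n, g (α h a) :=
        Finset.sum_nonneg fun h _ => hgpos _ (aux_map_nonneg (α h) ha)
      have h2 : (0 : ℂ) ≤ (((F n).card : ℂ))⁻¹ := by
        rw [hinvcast n]
        have : (0 : ℝ) ≤ (((F n).card : ℝ))⁻¹ := (inv_nonneg).2 (hcardpos n).le
        exact_mod_cast Complex.real_le_real.2 this
      exact mul_nonneg h2 h1
    exact aux_isClosed_nonneg.mem_of_tendsto (hL a) (Filter.Eventually.of_forall hmem)
  · -- unit
    refine tendsto_nhds_unique (hL 1) ?_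
    have hψ1 : ∀ n, ψ n (1 : A) = 1 := by
      intro n
      rw [hψ]
      simp only [map_one, hg1, Finset.sum_const, nsmul_eq_mul, mul_one]
      exact inv_mul_cancel₀ (hcne n)
    exact tendsto_const_nhds.congr fun n => (hψ1 n).symm
  · -- restriction
    intro b
    refine tendsto_nhds_unique (hL ↑b) ?_
    have hψb : ∀ n, ψ n (↑b : A) = ω b := by
      intro n
      have he : ∀ h ∈ F n, g (α h (↑b : A)) = ω b := by
        intro h _
        have hmemB : α h (↑b : A) ∈ B := hB_inv h ↑b b.2
        rw [show g (α h (↑b : A)) = ω ⟨α h (↑b : A), hmemB⟩ from hgB ⟨α h (↑b : A), hmemB⟩]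
        exact hinvar h b ⟨α h (↑b : A), hmemB⟩ rfl
      rw [hψ]
      simp only
      rw [Finset.sum_congr rfl he, Finset.sum_const, nsmul_eq_mul, ← mul_assoc,
        inv_mul_cancel₀ (hcne n), one_mul]
    exact tendsto_const_nhds.congr fun n => (hψb n).symm
  · -- invariance
    intro s a
    have hkey : Tendsto (fun n => ψ n (α s a) - ψ n a) atTop (𝓝 0) := by
      refine squeeze_zero_norm (a := fun n => 2 * ‖a‖ * (((((F n).image (fun h => h * s)) ∆ (F n)).card : ℝ)
          / ((F n).card : ℝ))) ?_ ?_
      · intro n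
        have hre : ∀ h ∈ F n, g (α h (α s a)) = g (α (h * s) a) := by
          intro h _
          rw [hmul h s]
          rfl
        have hdiff : ψ n (α s a) - ψ n a =
            (((F n).card : ℂ))⁻¹ *
              ((∑ h ∈ F n, g (α (h * s) a)) - ∑ h ∈ F n, g (α h a)) := by
          rw [hψ]
          simp only
          rw [Finset.sum_congr rfl hre, mul_sub]
        rw [hdiff, norm_mul, norm_inv, Complex.norm_natCast]
        have hb := aux_sum_bound (F n) s (fun k => g (α k a)) ‖a‖ (norm_nonneg a)
          (fun k => hgap k a)
        calc (((F n).card : ℝ))⁻¹ * ‖(∑ h ∈ F n, g (α (h * s) a)) - ∑ h ∈ F n, g (α h a)‖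
            ≤ (((F n).card : ℝ))⁻¹ *
              (2 * ‖a‖ * (((((F n).image (fun h => h * s)) ∆ (F n)).card : ℝ))) := by
              have hnn := (hcardpos n).le
              gcongr
          _ = 2 * ‖a‖ * (((((F n).image (fun h => h * s)) ∆ (F n)).card : ℝ)
              / ((F n).card : ℝ)) := by
              field_simp
      · have := (hFol s).const_mul (2 * ‖a‖)
        simpa using this
    have h1 : Tendsto (fun n => ψ n (α s a) - ψ n a) ↑U (𝓝 0) := hkey.mono_left hU
    have h2 := (hL (α s a)).sub (hL a)
    have h3 := tendsto_nhds_unique h2 h1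
    exact sub_eq_zero.1 h3
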